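/- Let $n \in \mathbb{N}$, let $a, b \in \mathbb{R}_{+}^{n}$ be nonnegative vectors, and let $\Delta \in \mathbb{N}$. Define $P$ as the set of $y \in \mathbb{R}_{\ge 0}^{n \times n}$ with $\sum_i y_{ij} = 1$ for all $j$, $\sum_j y_{ij} = 1$ for all $i$, $y_{ij} = y_{ji}$ for all $i,j$, and $\sum_i y_{ii} \ge n - 2\Delta$; and define $P'$ as the set of $z \in \mathbb{R}_{\ge 0}^{\mathcal{E}}$, $\mathcal{E} = \{(i,j) : 1 \le i < j \le n\}$, with $\sum_{j : j > i} z_{ij} + \sum_{j : j < i} z_{ji} \le 1$ for all $i$ and $\sum_{(i,j) \in \mathcal{E}} z_{ij} \le \Delta$. Then $\min_{y \in P} \sum_{i=1}^n \sum_{j=1}^n a_i b_j\, y_{ij} \;=\; \sum_{i=1}^n a_i b_i \;-\; \max_{z \in P'} \sum_{(i,j) \in \mathcal{E}} (a_i - a_j)(b_i - b_j)\, z_{ij}$. -/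

import Mathlib

open Finset

private lemma tri_split1 {n : ℕ} (g : Fin n → ℝ) (i : Fin n) :
    ∑ j, g j = (∑ j, if i < j then g j else 0) + g i
      + (∑ j, if j < i then g j else 0) := by
  have h : ∀ j : Fin n, g j =
      (if i < j then g j else 0) + (if i = j then g j else 0)
        + (if j < i then g j else 0) := by
    intro j
    rcases lt_trichotomy i j with h|h|h
    · simp [h, h.ne, lt_asymm h]
    · subst h; simp
    · simp [h, h.ne', lt_asymm h]
  calc ∑ j, g j = ∑ j, ((if i < j then g j else 0) + (if i = j then g j else 0)
      + (if j < i then g j else 0)) := Finset.sum_congr rfl fun j _ => h j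
    _ = _ := by
        rw [Finset.sum_add_distrib, Finset.sum_add_distrib, Finset.sum_ite_eq]
        simp

private lemma tri_split {n : ℕ} (f : Fin n → Fin n → ℝ) :
    ∑ i, ∑ j, f i j =
      (∑ i, ∑ j, if i < j then f i j else 0) + (∑ i, f i i)
        + (∑ i, ∑ j, if j < i then f i j else 0) := by
  have : ∀ i : Fin n, ∑ j, f i j = (∑ j, if i < j then f i j else 0) + f i i
      + (∑ j, if j < i then f i j else 0) := fun i => tri_split1 (f i) i
  rw [Finset.sum_congr rfl fun i _ => this i, Finset.sum_add_distrib,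
    Finset.sum_add_distrib]

private lemma lower_swap {n : ℕ} (f : Fin n → Fin n → ℝ) :
    ∑ i, ∑ j, (if j < i then f i j else 0) = ∑ i, ∑ j, if i < j then f j i else 0 := by
  rw [Finset.sum_comm]

private lemma key_identity {n : ℕ} (a b : Fin n → ℝ) (y : Fin n → Fin n → ℝ)
    (hrow : ∀ i, ∑ j, y i j = 1) (hsym : ∀ i j, y i j = y j i) :
    ∑ i, ∑ j, a i * b j * y i j
      = (∑ i, a i * b i)
        - ∑ i, ∑ j, (if i < j then (a i - a j) * (b i - b j) * y i j else 0) := by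
  have hcol : ∀ j, ∑ i, y i j = 1 := fun j => by
    calc ∑ i, y i j = ∑ i, y j i := Finset.sum_congr rfl fun i _ => hsym i j
      _ = 1 := hrow j
  have e1 : ∑ i, ∑ j, a i * b i * y i j = ∑ i, a i * b i := by
    simp_rw [← Finset.mul_sum, hrow, mul_one]
  have e2 : ∑ i, ∑ j, a j * b j * y i j = ∑ i, a i * b i := by
    rw [Finset.sum_comm]; simp_rw [← Finset.mul_sum, hcol, mul_one]
  have e3 : ∑ i, ∑ j, a j * b i * y i j = ∑ i, ∑ j, a i * b j * y i j := by
    rw [Finset.sum_comm]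
    exact Finset.sum_congr rfl fun i _ => Finset.sum_congr rfl fun j _ => by
      rw [hsym]
  have hT : ∑ i, ∑ j, (a i - a j) * (b i - b j) * y i j
      = 2 * ((∑ i, a i * b i) - ∑ i, ∑ j, a i * b j * y i j) := by
    have expand : ∀ i j : Fin n, (a i - a j) * (b i - b j) * y i j
        = a i * b i * y i j + a j * b j * y i j - a i * b j * y i j
          - a j * b i * y i j := fun i j => by ring
    calc ∑ i, ∑ j, (a i - a j) * (b i - b j) * y i j
        = ∑ i, ∑ j, (a i * b i * y i j + a j * b j * y i j - a i * b j * y i j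
            - a j * b i * y i j) :=
          Finset.sum_congr rfl fun i _ => Finset.sum_congr rfl fun j _ => expand i j
      _ = (∑ i, ∑ j, a i * b i * y i j) + (∑ i, ∑ j, a j * b j * y i j)
            - (∑ i, ∑ j, a i * b j * y i j) - (∑ i, ∑ j, a j * b i * y i j) := by
          simp_rw [Finset.sum_sub_distrib, Finset.sum_add_distrib]
      _ = _ := by rw [e1, e2, e3]; ring
  have hdiag : ∀ i : Fin n, (a i - a i) * (b i - b i) * y i i = 0 := by simp
  have hlow : ∑ i, ∑ j, (if j < i then (a i - a j) * (b i - b j) * y i j else 0)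
      = ∑ i, ∑ j, (if i < j then (a i - a j) * (b i - b j) * y i j else 0) := by
    rw [lower_swap]
    refine Finset.sum_congr rfl fun i _ => Finset.sum_congr rfl fun j _ => ?_
    by_cases h : i < j
    · simp only [h, if_true]
      rw [hsym j i]; ring
    · simp [h]
  have := tri_split (fun i j => (a i - a j) * (b i - b j) * y i j)
  simp only [hdiag, Finset.sum_const_zero, add_zero] at this
  rw [hlow] at this
  linarith


/-- **Equivalence of the symmetric assignment LP and the cardinality-constrained
matching LP with product costs.**
The minimum of `∑ i j, a i * b j * y i j` over the level-constrained symmetric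
fractional assignment polytope equals `∑ i, a i * b i` minus the maximum of
`∑_{i<j} (a i - a j)(b i - b j) z i j` over the cardinality-constrained fractional
matching polytope of the complete graph. -/
theorem symmetric_assignment_eq_diagonal_sub_matching
    (n : ℕ) (a b : Fin n → ℝ) (ha : ∀ i, 0 ≤ a i) (hb : ∀ i, 0 ≤ b i) (Δ : ℕ) :
    sInf ((fun y : Fin n → Fin n → ℝ => ∑ i, ∑ j, a i * b j * y i j) ''
        {y | (∀ i j, 0 ≤ y i j) ∧ (∀ j, ∑ i, y i j = 1) ∧ (∀ i, ∑ j, y i j = 1) ∧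
          (∀ i j, y i j = y j i) ∧ (n : ℝ) - 2 * (Δ : ℝ) ≤ ∑ i, y i i})
      = ∑ i, a i * b i
        - sSup ((fun z : Fin n → Fin n → ℝ =>
              ∑ i, ∑ j, if i < j then (a i - a j) * (b i - b j) * z i j else 0) ''
            {z | (∀ i j, i < j → 0 ≤ z i j) ∧
              (∀ i : Fin n, (∑ j, if i < j then z i j else 0)
                + (∑ j, if j < i then z j i else 0) ≤ 1) ∧
              (∑ i, ∑ j, if i < j then z i j else 0) ≤ (Δ : ℝ)}) := by
  set C : ℝ := ∑ i, a i * b i with hC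
  set A := ((fun y : Fin n → Fin n → ℝ => ∑ i, ∑ j, a i * b j * y i j) ''
        {y | (∀ i j, 0 ≤ y i j) ∧ (∀ j, ∑ i, y i j = 1) ∧ (∀ i, ∑ j, y i j = 1) ∧
          (∀ i j, y i j = y j i) ∧ (n : ℝ) - 2 * (Δ : ℝ) ≤ ∑ i, y i i}) with hAdef
  set B := ((fun z : Fin n → Fin n → ℝ =>
              ∑ i, ∑ j, if i < j then (a i - a j) * (b i - b j) * z i j else 0) ''
            {z | (∀ i j, i < j → 0 ≤ z i j) ∧
              (∀ i : Fin n, (∑ j, if i < j then z i j else 0)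
                + (∑ j, if j < i then z j i else 0) ≤ 1) ∧
              (∑ i, ∑ j, if i < j then z i j else 0) ≤ (Δ : ℝ)}) with hBdef
  -- forward: every value of A is C - (some value of B)
  have hAtoB : ∀ t ∈ A, ∃ s ∈ B, t = C - s := by
    rintro t ⟨y, ⟨h0, hcolsum, hrow, hsym, htr⟩, rfl⟩
    refine ⟨∑ i, ∑ j, if i < j then (a i - a j) * (b i - b j) * y i j else 0, ⟨y, ⟨?_, ?_, ?_⟩, rfl⟩, ?_⟩
    · exact fun i j _ => h0 i j
    · intro i
      have hl : (∑ j, if j < i then y j i else 0) = ∑ j, if j < i then y i j else 0 :=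
        Finset.sum_congr rfl fun j _ => by by_cases h : j < i <;> simp [h, hsym i j]
      have := tri_split1 (fun j => y i j) i
      rw [hrow i] at this
      rw [hl]
      have hd : 0 ≤ y i i := h0 i i
      linarith
    · -- cardinality bound
      have := tri_split (fun i j => y i j)
      have hn : ∑ i : Fin n, ∑ j, y i j = (n : ℝ) := by
        simp [hrow]
      have hl : (∑ i, ∑ j, if j < i then y i j else 0)
          = ∑ i, ∑ j, if i < j then y i j else 0 := by
        rw [lower_swap]
        exact Finset.sum_congr rfl fun i _ => Finset.sum_congr rfl fun j _ => by
          by_cases h : i < j <;> simp [h, hsym i j]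
      rw [hn, hl] at this
      linarith
    · have hkey := key_identity a b y hrow hsym
      show (∑ i, ∑ j, a i * b j * y i j)
          = C - ∑ i, ∑ j, (if i < j then (a i - a j) * (b i - b j) * y i j else 0)
      rw [hkey, hC]
  -- backward: C - (value of B) is a value of A
  have hBtoA : ∀ s ∈ B, C - s ∈ A := by
    rintro s ⟨z, ⟨hz0, hdeg, hcard⟩, rfl⟩
    set D : Fin n → ℝ := fun i =>
      (∑ j, if i < j then z i j else 0) + (∑ j, if j < i then z j i else 0) with hD
    set y : Fin n → Fin n → ℝ := fun i j =>
      if i = j then 1 - D i else if i < j then z i j else z j i with hy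
    have hyupper : ∀ i j : Fin n, i < j → y i j = z i j := by
      intro i j h; simp [hy, h, h.ne]
    have hysym : ∀ i j, y i j = y j i := by
      intro i j
      rcases lt_trichotomy i j with h|h|h
      · simp [hy, h, h.ne, h.ne', lt_asymm h]
      · subst h; rfl
      · simp [hy, h, h.ne, h.ne', lt_asymm h]
    have hy0 : ∀ i j, 0 ≤ y i j := by
      intro i j
      rcases lt_trichotomy i j with h|h|h
      · rw [hyupper i j h]; exact hz0 i j h
      · subst h
        have := hdeg i
        simp only [hy, if_pos rfl]
        simp only [hD]
        linarith
      · rw [hysym]; rw [hyupper j i h]; exact hz0 j i h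
    have hyrow : ∀ i, ∑ j, y i j = 1 := by
      intro i
      have := tri_split1 (fun j => y i j) i
      have hu : (∑ j, if i < j then y i j else 0) = ∑ j, if i < j then z i j else 0 :=
        Finset.sum_congr rfl fun j _ => by
          by_cases h : i < j <;> simp [h, hyupper i j]
      have hl : (∑ j, if j < i then y i j else 0) = ∑ j, if j < i then z j i else 0 :=
        Finset.sum_congr rfl fun j _ => by
          by_cases h : j < i
          · simp only [h, if_true]; rw [hysym, hyupper j i h]
          · simp [h]
      have hdiagv : y i i = 1 - D i := by simp [hy]
      rw [hu, hl, hdiagv] at this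
      rw [this, hD]
      ring
    have hycol : ∀ j, ∑ i, y i j = 1 := fun j => by
      calc ∑ i, y i j = ∑ i, y j i := Finset.sum_congr rfl fun i _ => hysym i j
        _ = 1 := hyrow j
    have hytr : (n : ℝ) - 2 * (Δ : ℝ) ≤ ∑ i, y i i := by
      have hdv : ∀ i : Fin n, y i i = 1 - D i := fun i => by simp [hy]
      have h1 : ∑ i, y i i = (n : ℝ) - ∑ i, D i := by
        simp_rw [hdv, Finset.sum_sub_distrib]
        simp
      have h2 : ∑ i, D i = 2 * ∑ i, ∑ j, if i < j then z i j else 0 := by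
        simp only [hD]
        rw [Finset.sum_add_distrib]
        have : (∑ i, ∑ j, if j < i then z j i else 0)
            = ∑ i, ∑ j, if i < j then z i j else 0 := by
          rw [lower_swap]
        rw [this]; ring
      rw [h1, h2]
      linarith
    refine ⟨y, ⟨hy0, hycol, hyrow, hysym, hytr⟩, ?_⟩
    have hkey := key_identity a b y hyrow hysym
    have hSz : (∑ i, ∑ j, if i < j then (a i - a j) * (b i - b j) * y i j else 0)
        = ∑ i, ∑ j, if i < j then (a i - a j) * (b i - b j) * z i j else 0 :=
      Finset.sum_congr rfl fun i _ => Finset.sum_congr rfl fun j _ => by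
        by_cases h : i < j <;> simp [h, hyupper i j]
    show (∑ i, ∑ j, a i * b j * y i j)
        = C - ∑ i, ∑ j, (if i < j then (a i - a j) * (b i - b j) * z i j else 0)
    rw [hkey, hSz, hC]
  -- B nonempty (zero matching)
  have hBne : B.Nonempty := by
    refine ⟨0, (0 : Fin n → Fin n → ℝ), ⟨fun i j _ => le_refl 0, fun i => by simp, by
      simp [Nat.cast_nonneg]⟩, by simp⟩
  -- B bounded above
  have hBbdd : BddAbove B := by
    refine ⟨∑ i : Fin n, ∑ j, |(a i - a j) * (b i - b j)|, ?_⟩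
    rintro s ⟨z, ⟨hz0, hdeg, hcard⟩, rfl⟩
    refine Finset.sum_le_sum fun i _ => Finset.sum_le_sum fun j _ => ?_
    by_cases h : i < j
    · simp only [h, if_true]
      have hz1 : z i j ≤ 1 := by
        have hterm : z i j = (if i < j then z i j else 0) := by simp [h]
        have hle : (if i < j then z i j else 0) ≤ ∑ k, if i < k then z i k else 0 := by
          refine Finset.single_le_sum (f := fun k => if i < k then z i k else 0) (fun k _ => ?_) (Finset.mem_univ j)
          by_cases hk : i < k
          · simp [hk, hz0 i k hk]
          · simp [hk]
        have hnn : 0 ≤ ∑ k, if k < i then z k i else 0 :=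
          Finset.sum_nonneg fun k _ => by
            by_cases hk : k < i
            · simp [hk, hz0 k i hk]
            · simp [hk]
        have := hdeg i
        linarith [hterm ▸ hle]
      have hznn : 0 ≤ z i j := hz0 i j h
      calc (a i - a j) * (b i - b j) * z i j
          ≤ |(a i - a j) * (b i - b j)| * z i j :=
            mul_le_mul_of_nonneg_right (le_abs_self _) hznn
        _ ≤ |(a i - a j) * (b i - b j)| * 1 :=
            mul_le_mul_of_nonneg_left hz1 (abs_nonneg _)
        _ = _ := mul_one _
    · simp [h, abs_nonneg]
      exact mul_nonneg (abs_nonneg _) (abs_nonneg _)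
  -- A nonempty (identity matrix)
  have hAne : A.Nonempty := by
    refine ⟨_, (fun i j => if i = j then (1:ℝ) else 0), ⟨?_, ?_, ?_, ?_, ?_⟩, rfl⟩
    · intro i j; by_cases h : i = j <;> simp [h]
    · intro j; simp
    · intro i; simp
    · intro i j; simp [eq_comm]
    · simp
  -- A bounded below
  have hAbdd : BddBelow A := by
    obtain ⟨M, hM⟩ := hBbdd
    refine ⟨C - M, ?_⟩
    rintro t ht
    obtain ⟨s, hsB, rfl⟩ := hAtoB t ht
    have := hM hsB
    linarith
  -- conclude
  refine le_antisymm ?_ ?_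
  · have h1 : sSup B ≤ C - sInf A := by
      refine csSup_le hBne fun s hs => ?_
      have := csInf_le hAbdd (hBtoA s hs)
      linarith
    linarith
  · refine le_csInf hAne fun t ht => ?_
    obtain ⟨s, hsB, rfl⟩ := hAtoB t ht
    have := le_csSup hBbdd hsB
    linarith
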